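/- For any real numbers γ_1, γ_2 ≥ 0 with γ_1 + γ_2 > 0 and any function g : S_3 → ℝ, ∑_{σ ∈ S_3} (γ_1 [g(σ) − g((1 3)σ)]^2 + γ_2 [g(σ) − g((2 3)σ)]^2) ≥ ∑_{σ ∈ S_3} (γ_1 γ_2 / (γ_1 + γ_2)) [g(σ) − g((1 2)σ)]^2. -/

import Mathlib

open BigOperators Equiv

set_option maxHeartbeats 1000000 in
theorem stmt4 (γ₁ γ₂ : ℝ) (h₁ : 0 ≤ γ₁) (h₂ : 0 ≤ γ₂) (hpos : 0 < γ₁ + γ₂)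
    (g : Equiv.Perm (Fin 3) → ℝ) :
    ∑ σ : Equiv.Perm (Fin 3),
        (γ₁ * (g σ - g (Equiv.swap (0 : Fin 3) 2 * σ)) ^ 2 +
         γ₂ * (g σ - g (Equiv.swap (1 : Fin 3) 2 * σ)) ^ 2) ≥
    ∑ σ : Equiv.Perm (Fin 3),
        γ₁ * γ₂ / (γ₁ + γ₂) * (g σ - g (Equiv.swap (0 : Fin 3) 1 * σ)) ^ 2 := by
  have huniv : (Finset.univ : Finset (Perm (Fin 3))) =
      {1, swap 0 1, swap 0 2, swap 1 2, swap 0 1 * swap 1 2, swap 1 2 * swap 0 1} := by decide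
  rw [huniv]
  have e1 : swap (0:Fin 3) 2 * 1 = swap 0 2 := by decide
  have e2 : swap (0:Fin 3) 2 * swap 0 1 = swap 0 1 * swap 1 2 := by decide
  have e3 : swap (0:Fin 3) 2 * swap 0 2 = 1 := by decide
  have e4 : swap (0:Fin 3) 2 * swap 1 2 = swap 1 2 * swap 0 1 := by decide
  have e5 : swap (0:Fin 3) 2 * (swap 0 1 * swap 1 2) = swap 0 1 := by decide
  have e6 : swap (0:Fin 3) 2 * (swap 1 2 * swap 0 1) = swap 1 2 := by decide
  have f1 : swap (1:Fin 3) 2 * 1 = swap 1 2 := by decide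
  have f3 : swap (1:Fin 3) 2 * swap 0 2 = swap 0 1 * swap 1 2 := by decide
  have f4 : swap (1:Fin 3) 2 * swap 1 2 = 1 := by decide
  have f5 : swap (1:Fin 3) 2 * (swap 0 1 * swap 1 2) = swap 0 2 := by decide
  have f6 : swap (1:Fin 3) 2 * (swap 1 2 * swap 0 1) = swap 0 1 := by decide
  have d1 : swap (0:Fin 3) 1 * 1 = swap 0 1 := by decide
  have d2 : swap (0:Fin 3) 1 * swap 0 1 = 1 := by decide
  have d3 : swap (0:Fin 3) 1 * swap 0 2 = swap 1 2 * swap 0 1 := by decide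
  have d5 : swap (0:Fin 3) 1 * (swap 0 1 * swap 1 2) = swap 1 2 := by decide
  have d6 : swap (0:Fin 3) 1 * (swap 1 2 * swap 0 1) = swap 0 2 := by decide
  rw [Finset.sum_insert (by decide), Finset.sum_insert (by decide),
    Finset.sum_insert (by decide), Finset.sum_insert (by decide),
    Finset.sum_insert (by decide), Finset.sum_singleton,
    Finset.sum_insert (by decide), Finset.sum_insert (by decide),
    Finset.sum_insert (by decide), Finset.sum_insert (by decide),
    Finset.sum_insert (by decide), Finset.sum_singleton,
    e1, e2, e3, e4, e5, e6, f1, f3, f4, f5, f6, d1, d2, d3, d5, d6]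
  set a := g 1
  set b := g (swap 0 1)
  set c := g (swap 0 2)
  set d := g (swap 1 2)
  set e := g (swap 0 1 * swap 1 2)
  set f := g (swap 1 2 * swap 0 1)
  rw [ge_iff_le, div_mul_eq_mul_div, div_mul_eq_mul_div, div_mul_eq_mul_div,
    div_mul_eq_mul_div, div_mul_eq_mul_div, div_mul_eq_mul_div,
    ← add_div, ← add_div, ← add_div, ← add_div,
    ← add_div, div_le_iff₀ hpos]
  nlinarith [sq_nonneg (γ₁ * (a - c + (b - e)) + γ₂ * (a - d + (b - f))),
    sq_nonneg (γ₁ * (a - c - (b - e) + 2 * (d - f)) - γ₂ * (a - d - (b - f) + 2 * (c - e))),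
    sq_nonneg (γ₁ * (a - c - (b - e) - (d - f)) + γ₂ * (a - d - (b - f) - (c - e))),
    sq_nonneg (γ₁ * (a - c - (b - e) - (d - f))),
    sq_nonneg (γ₂ * (a - d - (b - f) - (c - e)))]
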